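/- Let F be a normalized finite Orlicz function, and let (A_n)_{n∈ℕ} be pairwise disjoint Borel subsets of an interval I ⊆ ℝ (with Lebesgue measure) with 0 < |A_n| < ∞. Let s_n > 0 satisfy F(s_n)·|A_n| = 1 for every n. Then: (i) the functionals φ*_n(g) = (F(s_n)/s_n)·∫_{A_n} g dx are biorthogonal to the sequence φ_n = s_n·χ_{A_n}, i.e., φ*_m(φ_n) = δ_{mn}; (ii) for every finitely supported scalar sequence (a_n) and every t > 0 one has ∫_I F(|∑_n a_n s_n χ_{A_n}|/t) dx = ∑_n F(s_n|a_n|/t)/F(s_n); and consequently (iii) the Luxemburg norm of ∑_n a_n s_n χ_{A_n} in L_F(I) equals inf{t > 0 : ∑_n F(s_n|a_n|/t)/F(s_n) ≤ 1}, so (φ_n) is isometrically equivalent to the unit vector system of the Musielak–Orlicz sequence space associated with the flows (F_{s_n}). -/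

import Mathlib

open MeasureTheory Set

/-- Let `F` be a normalized finite Orlicz function, `(A n)` pairwise disjoint
Borel subsets of an interval `I ⊆ ℝ` of finite positive Lebesgue measure, and `s n > 0` with
`F (s n) * |A n| = 1`. Then: (i) the functionals `g ↦ (F (s n) / s n) * ∫_{A n} g` are
biorthogonal to `φ n = s n · χ_{A n}`; (ii) for every finitely supported scalars `a` and
`t > 0`, `∫_I F (|∑ a n s n χ_{A n}| / t) = ∑ F (s n |a n| / t) / F (s n)`; hence (iii) the
Luxemburg norm of `∑ a n s n χ_{A n}` in `L_F(I)` equals the Luxemburg norm of `a` in the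
Musielak–Orlicz sequence space associated with the flows `(F_{s n})`. -/
theorem statement11 (F : ℝ → ℝ)
    (hFconv : ConvexOn ℝ (Ici (0:ℝ)) F) (hFmono : MonotoneOn F (Ici (0:ℝ)))
    (hF0 : F 0 = 0) (hFnonneg : ∀ t : ℝ, 0 ≤ t → 0 ≤ F t) (hF1 : F 1 = 1)
    (I : Set ℝ) (hI : I.OrdConnected)
    (A : ℕ → Set ℝ) (hmeas : ∀ n, MeasurableSet (A n)) (hsub : ∀ n, A n ⊆ I)
    (hdisj : Pairwise (Function.onFun Disjoint A))
    (hpos : ∀ n, 0 < volume (A n)) (hfin : ∀ n, volume (A n) < ⊤)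
    (s : ℕ → ℝ) (hs : ∀ n, 0 < s n)
    (hnorm1 : ∀ n, F (s n) * (volume (A n)).toReal = 1) :
    (∀ m n : ℕ,
      (F (s m) / s m) * (∫ x in A m, s n * (A n).indicator (fun _ => (1:ℝ)) x)
        = if m = n then 1 else 0) ∧
    (∀ (Λ : Finset ℕ) (a : ℕ → ℝ) (t : ℝ), 0 < t →
      (∫ x in I, F (|∑ n ∈ Λ, a n * (s n * (A n).indicator (fun _ => (1:ℝ)) x)| / t))
        = ∑ n ∈ Λ, F (s n * |a n| / t) / F (s n)) ∧
    (∀ (Λ : Finset ℕ) (a : ℕ → ℝ),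
      sInf {t : ℝ | 0 < t ∧
          (∫ x in I,
            F (|∑ n ∈ Λ, a n * (s n * (A n).indicator (fun _ => (1:ℝ)) x)| / t)) ≤ 1}
        = sInf {t : ℝ | 0 < t ∧ ∑ n ∈ Λ, F (s n * |a n| / t) / F (s n) ≤ 1}) := by

  have hFs : ∀ n, 0 < F (s n) := by
    intro n
    have hv : 0 < (volume (A n)).toReal :=
      ENNReal.toReal_pos (hpos n).ne' (hfin n).ne
    nlinarith [hnorm1 n]
  have hvol : ∀ n, (volume (A n)).toReal = 1 / F (s n) := by
    intro n
    have h := hnorm1 n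
    have := hFs n
    field_simp
    linarith
  have hpt : ∀ (Λ : Finset ℕ) (a : ℕ → ℝ) (t : ℝ), 0 < t → ∀ x : ℝ,
      F (|∑ n ∈ Λ, a n * (s n * (A n).indicator (fun _ => (1:ℝ)) x)| / t)
        = ∑ n ∈ Λ, (A n).indicator (fun _ => F (s n * |a n| / t)) x := by
    intro Λ a t ht x
    by_cases hx : ∃ m ∈ Λ, x ∈ A m
    · obtain ⟨m, hm, hxm⟩ := hx
      have hnot : ∀ n, n ≠ m → x ∉ A n := by
        intro n hnm hxn
        exact (hdisj hnm).le_bot ⟨hxn, hxm⟩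
      have h1 : ∑ n ∈ Λ, a n * (s n * (A n).indicator (fun _ => (1:ℝ)) x)
          = a m * s m := by
        rw [Finset.sum_eq_single m]
        · simp [indicator_of_mem hxm]
        · intro n _ hnm; simp [indicator_of_notMem (hnot n hnm)]
        · intro h; exact absurd hm h
      have h2 : ∑ n ∈ Λ, (A n).indicator (fun _ => F (s n * |a n| / t)) x
          = F (s m * |a m| / t) := by
        rw [Finset.sum_eq_single m]
        · simp [indicator_of_mem hxm]
        · intro n _ hnm; simp [indicator_of_notMem (hnot n hnm)]
        · intro h; exact absurd hm h
      rw [h1, h2, abs_mul, abs_of_pos (hs m)]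
      ring_nf
    · push_neg at hx
      have h1 : ∑ n ∈ Λ, a n * (s n * (A n).indicator (fun _ => (1:ℝ)) x) = 0 := by
        refine Finset.sum_eq_zero fun n hn => ?_
        simp [indicator_of_notMem (hx n hn)]
      have h2 : ∑ n ∈ Λ, (A n).indicator (fun _ => F (s n * |a n| / t)) x = 0 := by
        refine Finset.sum_eq_zero fun n hn => ?_
        simp [indicator_of_notMem (hx n hn)]
      rw [h1, h2]
      simp [hF0]
  have part2 : ∀ (Λ : Finset ℕ) (a : ℕ → ℝ) (t : ℝ), 0 < t →
      (∫ x in I, F (|∑ n ∈ Λ, a n * (s n * (A n).indicator (fun _ => (1:ℝ)) x)| / t))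
        = ∑ n ∈ Λ, F (s n * |a n| / t) / F (s n) := by
    intro Λ a t ht
    have hint : ∀ n ∈ Λ,
        Integrable ((A n).indicator (fun _ => F (s n * |a n| / t))) (volume.restrict I) := by
      intro n _
      rw [integrable_indicator_iff (hmeas n)]
      refine integrableOn_const ?_
      exact (lt_of_le_of_lt (Measure.restrict_apply_le _ _) (hfin n)).ne
    calc (∫ x in I, F (|∑ n ∈ Λ, a n * (s n * (A n).indicator (fun _ => (1:ℝ)) x)| / t))
        = ∫ x in I, ∑ n ∈ Λ, (A n).indicator (fun _ => F (s n * |a n| / t)) x := by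
          refine integral_congr_ae ?_
          filter_upwards with x using hpt Λ a t ht x
      _ = ∑ n ∈ Λ, ∫ x in I, (A n).indicator (fun _ => F (s n * |a n| / t)) x :=
          integral_finset_sum Λ hint
      _ = ∑ n ∈ Λ, F (s n * |a n| / t) / F (s n) := by
          refine Finset.sum_congr rfl fun n _ => ?_
          rw [integral_indicator_const _ (hmeas n), measureReal_def, Measure.restrict_apply (hmeas n),
            inter_eq_left.2 (hsub n), smul_eq_mul, hvol n]
          ring
  refine ⟨?_, part2, ?_⟩
  · intro m n
    have hi : (∫ x in A m, s n * (A n).indicator (fun _ => (1:ℝ)) x)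
        = s n * (volume (A n ∩ A m)).toReal := by
      rw [integral_const_mul, integral_indicator_const _ (hmeas n), measureReal_def,
        Measure.restrict_apply (hmeas n), smul_eq_mul, mul_one]
    rw [hi]
    by_cases hmn : m = n
    · subst hmn
      simp only [inter_self, if_pos rfl, if_true]
      rw [hvol m]
      have hsm := (hs m).ne'
      have hFm := (hFs m).ne'
      field_simp
    · rw [if_neg hmn]
      have : A n ∩ A m = ∅ :=
        Set.disjoint_iff_inter_eq_empty.1 (hdisj fun h => hmn h.symm)
      simp [this]
  · intro Λ a
    congr 1
    ext t
    simp only [Set.mem_setOf_eq]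
    constructor
    · rintro ⟨ht, h⟩
      exact ⟨ht, by rw [← part2 Λ a t ht]; exact h⟩
    · rintro ⟨ht, h⟩
      exact ⟨ht, by rw [part2 Λ a t ht]; exact h⟩
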